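/- Let A, B be abelian groups, d ≥ 1, and let P ∈ A, Q ∈ B have order exactly d. Let μ : A × B → (A × B)/⟨(P, Q)⟩ be the quotient map. Then μ(A × {0}) ∩ μ({0} × B) is the cyclic group of order d generated by μ(P, 0), and μ(P, 0) = -μ(0, Q). -/

import Mathlib

/-- Let `P ∈ A`, `Q ∈ B` have order exactly `d ≥ 1` and let
`μ : A × B → (A × B)/⟨(P,Q)⟩` be the quotient map. Then
`μ(A × {0}) ∩ μ({0} × B)` is the cyclic group generated by `μ(P, 0)`, this group has
order `d`, and `μ(P, 0) = -μ(0, Q)`. -/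
theorem stmt_15 {A B : Type*} [AddCommGroup A] [AddCommGroup B] (d : ℕ) (hd : 1 ≤ d)
    (P : A) (Q : B) (hP : addOrderOf P = d) (hQ : addOrderOf Q = d) :
    let μ := QuotientAddGroup.mk' (AddSubgroup.zmultiples ((P, Q) : A × B))
    (AddSubgroup.map μ (AddSubgroup.prod ⊤ ⊥)) ⊓ (AddSubgroup.map μ (AddSubgroup.prod ⊥ ⊤)) =
        AddSubgroup.zmultiples (μ (P, 0)) ∧
      Nat.card (AddSubgroup.zmultiples (μ (P, 0))) = d ∧
      μ (P, 0) = -μ (0, Q) := by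
  intro μ
  have hker : ∀ x : A × B, μ x = 0 ↔ ∃ m : ℤ, m • (P, Q) = x := by
    intro x
    rw [← AddMonoidHom.mem_ker, QuotientAddGroup.ker_mk', AddSubgroup.mem_zmultiples_iff]
  -- order of μ (P,0) is d
  have hord : addOrderOf (μ (P, 0)) = d := by
    have h1 : addOrderOf (μ (P, 0)) ∣ d := by
      rw [addOrderOf_dvd_iff_nsmul_eq_zero, ← map_nsmul, hker]
      exact ⟨0, by simp [Prod.smul_mk, ← hP, addOrderOf_nsmul_eq_zero]; rfl⟩
    have h2 : d ∣ addOrderOf (μ (P, 0)) := by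
      have := addOrderOf_nsmul_eq_zero (μ (P, 0))
      rw [← map_nsmul, hker] at this
      obtain ⟨m, hm⟩ := this
      simp only [Prod.smul_mk, Prod.mk.injEq, smul_zero] at hm
      have hdm : (d : ℤ) ∣ m := by rw [← hQ]; exact addOrderOf_dvd_iff_zsmul_eq_zero.mpr hm.2
      have hmP : m • P = 0 := by
        rw [← addOrderOf_dvd_iff_zsmul_eq_zero, hP]; exact hdm
      have : (addOrderOf (μ (P,0)) : ℕ) • P = 0 := by
        rw [← hm.1, hmP]
      rw [← hP]
      exact addOrderOf_dvd_iff_nsmul_eq_zero.mpr this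
    exact Nat.dvd_antisymm h1 h2
  have hneg : μ (P, 0) = -μ (0, Q) := by
    rw [eq_neg_iff_add_eq_zero, ← map_add, hker]
    exact ⟨1, by simp⟩
  refine ⟨?_, ?_, hneg⟩
  · apply le_antisymm
    · rintro x ⟨⟨⟨a, b⟩, ⟨-, hb⟩, hab⟩, ⟨⟨a', b'⟩, ⟨ha', -⟩, hab'⟩⟩
      simp only [AddSubgroup.mem_bot] at hb ha'
      subst hb ha'
      have : μ ((a, 0) - (0, b')) = 0 := by
        rw [map_sub, hab, hab', sub_self]
      rw [hker] at this
      obtain ⟨m, hm⟩ := this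
      rw [AddSubgroup.mem_zmultiples_iff]
      refine ⟨m, ?_⟩
      rw [← hab, ← map_zsmul]
      congr 1
      have := congrArg Prod.fst hm
      simp at this ⊢
      exact this
    · rw [AddSubgroup.zmultiples_le]
      refine ⟨⟨(P, 0), ⟨trivial, rfl⟩, rfl⟩, ⟨(0, -Q), ⟨rfl, trivial⟩, ?_⟩⟩
      rw [hneg, ← map_neg]
      congr 1
      simp
  · rw [Nat.card_zmultiples, hord]
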